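/- arXiv:2010.14321 — 8 statements merged into one kernel-verified Lean document; each statement's English description precedes it below -/
import Mathlib

section
/- Let R > 0 be a real number and let m ≥ 2 be a natural number. Then for every natural number n, 2^m · P_R((n+2)m) − (R(R+1)·2^{m−1}·P_R(m) − R²·2^{m−2}·P_R(m−2)) · P_R((n+1)m) + (−1)^m · R^m · P_R(nm) = 0. -/
/-- Generalized Pell numbers `P_R(n) = (2/(R·W))·(λⁿ − μⁿ)` with `W = √(R²+2R)`,
`λ = (R+W)/2`, `μ = (R−W)/2`. -/
noncomputable def PR (R : ℝ) (n : ℕ) : ℝ :=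
  (2 / (R * Real.sqrt (R ^ 2 + 2 * R))) *
    (((R + Real.sqrt (R ^ 2 + 2 * R)) / 2) ^ n - ((R - Real.sqrt (R ^ 2 + 2 * R)) / 2) ^ n)

/-- Three-term recurrence for the subsequence `P_R(mn)`:
`2^m·P_R((n+2)m) − (R(R+1)·2^{m−1}·P_R(m) − R²·2^{m−2}·P_R(m−2))·P_R((n+1)m)
  + (−1)^m·R^m·P_R(nm) = 0`. -/
theorem PR_subsequence_recurrence (R : ℝ) (hR : 0 < R) (m : ℕ) (hm : 2 ≤ m) (n : ℕ) :
    2 ^ m * PR R ((n + 2) * m) -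
      (R * (R + 1) * 2 ^ (m - 1) * PR R m - R ^ 2 * 2 ^ (m - 2) * PR R (m - 2)) *
        PR R ((n + 1) * m) +
      (-1 : ℝ) ^ m * R ^ m * PR R (n * m) = 0 := by
  obtain ⟨k, rfl⟩ : ∃ k, m = k + 2 := ⟨m - 2, by omega⟩
  have h1 : k + 2 - 1 = k + 1 := rfl
  have h2 : k + 2 - 2 = k := rfl
  rw [h1, h2]
  unfold PR
  set w := Real.sqrt (R ^ 2 + 2 * R) with hwdef
  have hw2 : w ^ 2 = R ^ 2 + 2 * R := Real.sq_sqrt (by nlinarith)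
  have hw0 : 0 < w := Real.sqrt_pos.mpr (by nlinarith)
  set l := (R + w) / 2 with hldef
  set u := (R - w) / 2 with hudef
  have hs : l + u = R := by rw [hldef, hudef]; ring
  have hp : l * u = -R / 2 := by rw [hldef, hudef]; linear_combination -hw2 / 4
  have hl2 : l ^ 2 = R * l + R / 2 := by rw [hldef]; linear_combination hw2 / 4
  have hu2 : u ^ 2 = R * u + R / 2 := by rw [hudef]; linear_combination hw2 / 4
  have hRw : R * w ≠ 0 := by positivity
  set A := l ^ k with hA
  set B := u ^ k with hB
  set a := l ^ (k + 2) with ha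
  set b := u ^ (k + 2) with hb
  have haA : a = A * l ^ 2 := by rw [ha, hA]; ring
  have hbB : b = B * u ^ 2 := by rw [hb, hB]; ring
  have core : (R + 1) * (A * l ^ 2 - B * u ^ 2) - R / 2 * (A - B) =
      (l - u) * (A * l ^ 2 + B * u ^ 2) := by
    linear_combination (A * (1 + u - l)) * hl2 - (B * (1 + l - u)) * hu2 +
      (R / 2 * (A - B)) * hs + (R * (A - B)) * hp
  have hC : R * (R + 1) * 2 ^ (k + 1) * (2 / (R * w) * (a - b)) -
      R ^ 2 * 2 ^ k * (2 / (R * w) * (A - B)) = 2 ^ (k + 2) * (a + b) := by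
    rw [haA, hbB]
    field_simp
    linear_combination (2 ^ (k + 2)) * core
  have hab : (-1 : ℝ) ^ (k + 2) * R ^ (k + 2) = 2 ^ (k + 2) * (a * b) := by
    rw [ha, hb]
    calc (-1 : ℝ) ^ (k + 2) * R ^ (k + 2) = (-R) ^ (k + 2) := by rw [← mul_pow]; norm_num
    _ = (2 * (l * u)) ^ (k + 2) := by rw [hp]; ring_nf
    _ = 2 ^ (k + 2) * (l ^ (k + 2) * u ^ (k + 2)) := by rw [mul_pow, mul_pow]
  have e1 : l ^ ((n + 2) * (k + 2)) = a ^ (n + 2) := by rw [ha, ← pow_mul']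
  have e2 : u ^ ((n + 2) * (k + 2)) = b ^ (n + 2) := by rw [hb, ← pow_mul']
  have e3 : l ^ ((n + 1) * (k + 2)) = a ^ (n + 1) := by rw [ha, ← pow_mul']
  have e4 : u ^ ((n + 1) * (k + 2)) = b ^ (n + 1) := by rw [hb, ← pow_mul']
  have e5 : l ^ (n * (k + 2)) = a ^ n := by rw [ha, ← pow_mul']
  have e6 : u ^ (n * (k + 2)) = b ^ n := by rw [hb, ← pow_mul']
  rw [e1, e2, e3, e4, e5, e6]
  linear_combination (-(2 / (R * w) * (a ^ (n + 1) - b ^ (n + 1)))) * hC +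
    (2 / (R * w) * (a ^ n - b ^ n)) * hab
end

section
/- Let R > 0 be a real number and let m ≥ 2 be a natural number. In ℝ⟦z⟧, the generating function F_m(z) = ∑_{n≥0} P_R(mn)·zⁿ satisfies (2^m − z·(R(R+1)·2^{m−1}·P_R(m) − R²·2^{m−2}·P_R(m−2)) + (−1)^m·R^m·z²) · F_m(z) = 2^m·P_R(m)·z. -/
open PowerSeries in
lemma aux_coeff (c1 c2 c3 c4 : ℝ) (a : ℕ → ℝ)
    (h0 : a 0 = 0) (h1 : c1 * a 1 = c4)
    (hrec : ∀ j, c1 * a (j+2) - c2 * a (j+1) + c3 * a j = 0) :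
    (C (R := ℝ) c1 - C (R := ℝ) c2 * X + C (R := ℝ) c3 * X^2) * PowerSeries.mk a = C (R := ℝ) c4 * X := by
  ext n
  rw [show (C (R := ℝ) c1 - C (R := ℝ) c2 * X + C (R := ℝ) c3 * X ^ 2) * PowerSeries.mk a
      = C (R := ℝ) c1 * PowerSeries.mk a - C (R := ℝ) c2 * (X ^ 1 * PowerSeries.mk a)
        + C (R := ℝ) c3 * (X ^ 2 * PowerSeries.mk a) by ring]
  simp only [map_add, map_sub, coeff_C_mul, coeff_X_pow_mul', coeff_mk, coeff_X]
  match n with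
  | 0 => simp [h0]
  | 1 => simp [h0, h1]
  | (j+2) =>
    have := hrec j
    simp only [show (1:ℕ) ≤ j+2 by omega, show (2:ℕ) ≤ j+2 by omega, if_true,
      show j+2-1 = j+1 from rfl, show j+2-2 = j from rfl, eq_false (by omega : ¬ (j+2 = 1))]
    simp only [if_true, if_false, mul_zero]
    linarith

lemma hB_aux (R s lk uk p : ℝ) (hR : R ≠ 0) (hs : s ≠ 0) (hs2 : s^2 = R^2 + 2*R) :
    R*(R+1)*(2*p) * (2/(R*s) * (lk*((R+s)/2)^2 - uk*((R-s)/2)^2))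
      - R^2*p*(2/(R*s) * (lk-uk))
    = 4*p*(lk*((R+s)/2)^2 + uk*((R-s)/2)^2) := by
  have key : (R+1)*(lk*((R+s)/2)^2 - uk*((R-s)/2)^2) - R/2*(lk-uk)
      = s*(lk*((R+s)/2)^2 + uk*((R-s)/2)^2) := by
    linear_combination ((1-R-s)*lk - (1-R+s)*uk)/4 * hs2
  have e : R*(R+1)*(2*p) * (2/(R*s) * (lk*((R+s)/2)^2 - uk*((R-s)/2)^2))
      - R^2*p*(2/(R*s) * (lk-uk))
      = (4*p/s) * ((R+1)*(lk*((R+s)/2)^2 - uk*((R-s)/2)^2) - R/2*(lk-uk)) := by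
    field_simp
    ring
  rw [e, key]
  field_simp

open PowerSeries in
/-- The generating function `F_m(z) = ∑_{n≥0} P_R(mn)·zⁿ` satisfies
`(2^m − z·(R(R+1)·2^{m−1}·P_R(m) − R²·2^{m−2}·P_R(m−2)) + (−1)^m·R^m·z²)·F_m(z)
  = 2^m·P_R(m)·z` in `ℝ⟦z⟧`. -/
theorem PR_subsequence_generating_function (R : ℝ) (hR : 0 < R) (m : ℕ) (hm : 2 ≤ m) :
    (C (R := ℝ) (2 ^ m) -
        C (R := ℝ) (R * (R + 1) * 2 ^ (m - 1) * PR R m - R ^ 2 * 2 ^ (m - 2) * PR R (m - 2)) * X +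
        C (R := ℝ) ((-1 : ℝ) ^ m * R ^ m) * X ^ 2) * PowerSeries.mk (fun n => PR R (m * n)) =
      C (R := ℝ) (2 ^ m * PR R m) * X := by
  obtain ⟨k, rfl⟩ : ∃ k, m = k + 2 := ⟨m - 2, by omega⟩
  simp only [show k + 2 - 1 = k + 1 from rfl, show k + 2 - 2 = k from rfl]
  set s := Real.sqrt (R ^ 2 + 2 * R) with hsdef
  have hs2 : s ^ 2 = R ^ 2 + 2 * R := Real.sq_sqrt (by nlinarith)
  have hspos : 0 < s := Real.sqrt_pos.mpr (by nlinarith)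
  have hsne : s ≠ 0 := ne_of_gt hspos
  have hRne : R ≠ 0 := ne_of_gt hR
  have hB : R * (R + 1) * 2 ^ (k + 1) * PR R (k+2) - R ^ 2 * 2 ^ k * PR R k
      = 2^(k+2) * (((R+s)/2)^(k+2) + ((R-s)/2)^(k+2)) := by
    have h := hB_aux R s (((R+s)/2)^k) (((R-s)/2)^k) (2^k) hRne hsne hs2
    simp only [PR, ← hsdef]
    rw [show ((R+s)/2:ℝ)^(k+2) = ((R+s)/2)^k*((R+s)/2)^2 by ring,
        show ((R-s)/2:ℝ)^(k+2) = ((R-s)/2)^k*((R-s)/2)^2 by ring,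
        show (2:ℝ)^(k+1) = 2*2^k by ring, show (2:ℝ)^(k+2) = 4*2^k by ring]
    exact h
  have hlu : ((R+s)/2) * ((R-s)/2) = -R/2 := by linear_combination (-1/4) * hs2
  have hC : ((-1:ℝ))^(k+2) * R^(k+2) = 2^(k+2) * (((R+s)/2)^(k+2) * ((R-s)/2)^(k+2)) := by
    rw [show (2:ℝ)^(k+2) * (((R+s)/2)^(k+2) * ((R-s)/2)^(k+2))
        = (2 * ((R+s)/2 * ((R-s)/2)))^(k+2) by rw [mul_pow, mul_pow], hlu,
      show (2:ℝ) * (-R/2) = (-1) * R by ring, mul_pow]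
  apply aux_coeff
  · simp [PR]
  · rw [mul_one]
  · intro j
    rw [hB, hC]
    simp only [PR, ← hsdef, pow_mul]
    ring
end

section
/- Let R > 0 be a real number, m ≥ 2 a natural number, and set a = 2^m·P_R(m), b = 2^m, c = −(R(R+1)·2^{m−1}·P_R(m) − R²·2^{m−2}·P_R(m−2)), d = (−1)^m·R^m. If b + c + d ≠ 0, then for every natural number n, ∑_{k=0}^{n} P_R(km) = (a − b·P_R(m(n+1)) + d·P_R(mn)) / (b + c + d). -/
private lemma PR_aux (R s A B : ℝ) (hR : R ≠ 0) (hs : s ≠ 0)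
    (hs2 : s ^ 2 = R ^ 2 + 2 * R) (j : ℕ) :
    -(R * (R + 1) * 2 ^ (j + 1) *
        (2 / (R * s) * (A * (R * (R + 1 + s) / 2) - B * (R * (R + 1 - s) / 2)))
      - R ^ 2 * 2 ^ j * (2 / (R * s) * (A - B)))
    = -(2 ^ (j + 2) * (A * (R * (R + 1 + s) / 2) + B * (R * (R + 1 - s) / 2))) := by
  field_simp
  linear_combination (2 ^ j * 4 * (A - B)) * hs2

/-- Closed form for the partial sums `∑_{k=0}^{n} P_R(km)`. -/
theorem PR_partial_sum (R : ℝ) (hR : 0 < R) (m : ℕ) (hm : 2 ≤ m)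
    (a b c d : ℝ) (ha : a = 2 ^ m * PR R m) (hb : b = 2 ^ m)
    (hc : c = -(R * (R + 1) * 2 ^ (m - 1) * PR R m - R ^ 2 * 2 ^ (m - 2) * PR R (m - 2)))
    (hd : d = (-1 : ℝ) ^ m * R ^ m) (hden : b + c + d ≠ 0) (n : ℕ) :
    ∑ k ∈ Finset.range (n + 1), PR R (k * m) =
      (a - b * PR R (m * (n + 1)) + d * PR R (m * n)) / (b + c + d) := by
  obtain ⟨j, rfl⟩ : ∃ j, m = j + 2 := ⟨m - 2, by omega⟩
  set s : ℝ := Real.sqrt (R ^ 2 + 2 * R) with hsdef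
  have hpos : (0:ℝ) < R ^ 2 + 2 * R := by nlinarith
  have hs0 : 0 < s := Real.sqrt_pos.mpr hpos
  have hs2 : s ^ 2 = R ^ 2 + 2 * R := Real.sq_sqrt hpos.le
  set l : ℝ := (R + s) / 2 with hldef
  set u : ℝ := (R - s) / 2 with hudef
  have hPR : ∀ k : ℕ, PR R k = 2 / (R * s) * (l ^ k - u ^ k) := fun k => rfl
  set C : ℝ := 2 / (R * s) with hCdef
  set L : ℝ := l ^ (j + 2) with hLdef
  set M : ℝ := u ^ (j + 2) with hMdef
  have hPk : ∀ k : ℕ, PR R ((j + 2) * k) = C * (L ^ k - M ^ k) := by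
    intro k
    rw [hPR, hLdef, hMdef, ← pow_mul, ← pow_mul]
  have hl2 : l ^ 2 = R * (R + 1 + s) / 2 := by
    rw [hldef]; linear_combination hs2 / 4
  have hu2 : u ^ 2 = R * (R + 1 - s) / 2 := by
    rw [hudef]; linear_combination hs2 / 4
  have hlu : l * u = -R / 2 := by
    rw [hldef, hudef]; linear_combination -hs2 / 4
  have ha' : a = b * (C * (L - M)) := by
    rw [ha, hb, hPR, hLdef, hMdef]
  have hd' : d = b * (L * M) := by
    have h3 : ((-1 : ℝ)) ^ (j + 2) * R ^ (j + 2) = 2 ^ (j + 2) * ((l * u) ^ (j + 2)) := by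
      rw [hlu, ← mul_pow, ← mul_pow, show (2 : ℝ) * (-R / 2) = -R from by ring]
      congr 1
      ring
    rw [hd, hb, hLdef, hMdef, ← mul_pow l u]
    exact h3
  have hc' : c = -(b * (L + M)) := by
    have h1 : j + 2 - 1 = j + 1 := by omega
    have h2 : j + 2 - 2 = j := by omega
    rw [hc, hb, h1, h2, hPR, hPR, hLdef, hMdef,
      show l ^ (j + 2) = l ^ j * l ^ 2 from by ring,
      show u ^ (j + 2) = u ^ j * u ^ 2 from by ring, hl2, hu2]
    exact PR_aux R s (l ^ j) (u ^ j) hR.ne' hs0.ne' hs2 j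
  clear_value s l u C L M
  have key : ∀ N : ℕ, (∑ k ∈ Finset.range (N + 1), C * (L ^ k - M ^ k)) * (b + c + d) =
      a - b * (C * (L ^ (N + 1) - M ^ (N + 1))) + d * (C * (L ^ N - M ^ N)) := by
    intro N
    induction N with
    | zero =>
      rw [Finset.sum_range_one, ha', hc', hd']
      ring
    | succ p ih =>
      rw [Finset.sum_range_succ, add_mul, ih, ha', hc', hd']
      ring
  have hsum : ∑ k ∈ Finset.range (n + 1), PR R (k * (j + 2)) =
      ∑ k ∈ Finset.range (n + 1), C * (L ^ k - M ^ k) := by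
    refine Finset.sum_congr rfl fun k _ => ?_
    rw [mul_comm, hPk]
  rw [hsum, hPk, hPk, eq_div_iff hden]
  exact key n
end

section
/- Let R > 0 be a real number and m, n natural numbers. Then P_R(n)^{2m+1} = (2^{2m} / (R^{3m}·(R+2)^m)) · ∑_{j=0}^{m} (−1)^j · C(2m+1, j) · P_R((2m+1−2j)·n) · (−R/2)^{jn}, where C(2m+1, j) denotes the binomial coefficient. -/
/-- Folded binomial expansion of `(a-b)^(2m+1)`. -/
lemma key_sub_pow_fold (a b : ℝ) (m : ℕ) :
    (a - b) ^ (2*m+1) = ∑ j ∈ Finset.range (m+1),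
      (-1:ℝ)^j * ((2*m+1).choose j : ℝ) * (a^(2*m+1-2*j) - b^(2*m+1-2*j)) * (a*b)^j := by
  rw [sub_pow]
  have h2 : 2*m+1+1 = (m+1)+(m+1) := by omega
  rw [h2, Finset.sum_range_add,
    ← Finset.sum_range_reflect
      (fun x => (-1:ℝ)^((m+1+x)+(2*m+1)) * a^(m+1+x) * b^(2*m+1-(m+1+x)) *
        ((2*m+1).choose (m+1+x) : ℝ)) (m+1),
    ← Finset.sum_add_distrib]
  apply Finset.sum_congr rfl
  intro j hj
  have hj' : j ≤ m := by simpa [Nat.lt_succ_iff] using hj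
  have e1 : m+1+(m+1-1-j) = 2*m+1-j := by omega
  rw [e1]
  have hC : ((2*m+1).choose (2*m+1-j) : ℝ) = ((2*m+1).choose j : ℝ) := by
    rw [Nat.choose_symm (by omega)]
  rw [hC]
  have e2 : 2*m+1-(2*m+1-j) = j := by omega
  rw [e2]
  have s1 : (-1:ℝ)^(j+(2*m+1)) = -(-1:ℝ)^j := by
    rw [pow_add]
    have : (-1:ℝ)^(2*m+1) = -1 := Odd.neg_one_pow ⟨m, by ring⟩
    rw [this]; ring
  have s2 : (-1:ℝ)^((2*m+1-j)+(2*m+1)) = (-1:ℝ)^j := by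
    have e3 : (2*m+1-j)+(2*m+1) = j + 2*(2*m+1-j) := by omega
    rw [e3, pow_add, pow_mul, neg_one_sq, one_pow, mul_one]
  rw [s1, s2]
  have pa : a^(2*m+1-j) = a^(2*m+1-2*j) * a^j := by
    rw [← pow_add]; congr 1; omega
  have pb : b^(2*m+1-j) = b^(2*m+1-2*j) * b^j := by
    rw [← pow_add]; congr 1; omega
  rw [pa, pb, mul_pow]
  ring

/-- Linearization of odd powers:
`P_R(n)^{2m+1} = (2^{2m}/(R^{3m}(R+2)^m)) · ∑_{j=0}^m (−1)^j·C(2m+1,j)·P_R((2m+1−2j)n)·(−R/2)^{jn}`. -/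
theorem PR_odd_power_linearization (R : ℝ) (hR : 0 < R) (m n : ℕ) :
    PR R n ^ (2 * m + 1) =
      2 ^ (2 * m) / (R ^ (3 * m) * (R + 2) ^ m) *
        ∑ j ∈ Finset.range (m + 1),
          (-1 : ℝ) ^ j * (Nat.choose (2 * m + 1) j : ℝ) * PR R ((2 * m + 1 - 2 * j) * n) *
            (-R / 2) ^ (j * n) := by
  have hWnn : (0:ℝ) ≤ R^2 + 2*R := by nlinarith
  set W := Real.sqrt (R^2 + 2*R) with hW
  have hWsq : W^2 = R*(R+2) := by
    rw [hW, Real.sq_sqrt hWnn]; ring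
  have hPR : ∀ k, PR R k = 2/(R*W) * (((R+W)/2)^k - ((R-W)/2)^k) := fun k => rfl
  have hlm : ((R+W)/2) * ((R-W)/2) = -R/2 := by
    have h : ((R+W)/2) * ((R-W)/2) = (R^2 - W^2)/4 := by ring
    rw [h, hWsq]; ring
  set a := ((R+W)/2)^n with ha
  set b := ((R-W)/2)^n with hb
  have habn : (-R/2)^n = a*b := by rw [ha, hb, ← mul_pow, hlm]
  have hsum : ∀ j ∈ Finset.range (m+1),
      (-1:ℝ)^j * (Nat.choose (2*m+1) j : ℝ) * PR R ((2*m+1-2*j)*n) * (-R/2)^(j*n)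
      = 2/(R*W) * ((-1:ℝ)^j * ((2*m+1).choose j : ℝ) *
          (a^(2*m+1-2*j) - b^(2*m+1-2*j)) * (a*b)^j) := by
    intro j hj
    rw [hPR, pow_mul' ((R+W)/2), pow_mul' ((R-W)/2), ← ha, ← hb,
      pow_mul' (-R/2), habn]
    ring
  rw [Finset.sum_congr rfl hsum, ← Finset.mul_sum]
  have hcoef : (2:ℝ)^(2*m) / (R^(3*m)*(R+2)^m) = (2/(R*W))^(2*m) := by
    rw [div_pow]
    congr 1
    rw [mul_pow, pow_mul W, hWsq, mul_pow]
    ring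
  rw [hcoef, hPR n, ← ha, ← hb, mul_pow, key_sub_pow_fold]
  ring
end

section
/- Let R > 0 be a real number, m ≥ 1 and n natural numbers. Then P_R(n)^{2m} = (2^{2m+1}/(R^{3m}(R+2)^m)) · ∑_{j=0}^{m−1} (−1)^j·C(2m, j)·(P_R(2(m−j)(n+1))/P_R(2(m−j)))·(−R/2)^{jn} − (2^{2m−1}/(R^{3m−1}(R+2)^m)) · ∑_{j=0}^{m−1} (−1)^j·C(2m, j)·(P_R(2(m−j)n)·Q_R(2(m−j))/P_R(2(m−j)))·(−R/2)^{jn} + (−1)^m·C(2m, m)·(2^{2m}/(R^{3m}(R+2)^m))·(−R/2)^{mn}, where C(2m, j) denotes the binomial coefficient. (For R > 0 the denominators P_R(2(m−j)) are nonzero.) -/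
/-- Companion sequence `Q_R(n) = (2/R)·(λⁿ + μⁿ)`. -/
noncomputable def QR (R : ℝ) (n : ℕ) : ℝ :=
  (2 / R) * (((R + Real.sqrt (R ^ 2 + 2 * R)) / 2) ^ n + ((R - Real.sqrt (R ^ 2 + 2 * R)) / 2) ^ n)

/-- Linearization of even powers of generalized Pell numbers. -/
theorem PR_even_power_linearization (R : ℝ) (hR : 0 < R) (m : ℕ) (hm : 1 ≤ m) (n : ℕ) :
    PR R n ^ (2 * m) =
      2 ^ (2 * m + 1) / (R ^ (3 * m) * (R + 2) ^ m) *
        ∑ j ∈ Finset.range m,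
          (-1 : ℝ) ^ j * (Nat.choose (2 * m) j : ℝ) *
            (PR R (2 * (m - j) * (n + 1)) / PR R (2 * (m - j))) * (-R / 2) ^ (j * n) -
      2 ^ (2 * m - 1) / (R ^ (3 * m - 1) * (R + 2) ^ m) *
        ∑ j ∈ Finset.range m,
          (-1 : ℝ) ^ j * (Nat.choose (2 * m) j : ℝ) *
            (PR R (2 * (m - j) * n) * QR R (2 * (m - j)) / PR R (2 * (m - j))) *
            (-R / 2) ^ (j * n) +
      (-1 : ℝ) ^ m * (Nat.choose (2 * m) m : ℝ) * (2 ^ (2 * m) / (R ^ (3 * m) * (R + 2) ^ m)) *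
        (-R / 2) ^ (m * n) := by
  set w := Real.sqrt (R ^ 2 + 2 * R) with hw_def
  have hw2 : w ^ 2 = R ^ 2 + 2 * R := Real.sq_sqrt (by nlinarith)
  have hwpos : 0 < w := Real.sqrt_pos.mpr (by nlinarith)
  set l := (R + w) / 2 with hl_def
  set u := (R - w) / 2 with hu_def
  set c := 2 / (R * w) with hc_def
  have hcpos : 0 < c := by positivity
  have hlu : l * u = -R / 2 := by
    have : l * u = (R ^ 2 - w ^ 2) / 4 := by rw [hl_def, hu_def]; ring
    rw [this, hw2]; ring
  have hsq : u ^ 2 < l ^ 2 := by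
    have : l ^ 2 - u ^ 2 = R * w := by rw [hl_def, hu_def]; ring
    nlinarith
  have hP : ∀ k, PR R k = c * (l ^ k - u ^ k) := fun k => rfl
  have hQ : ∀ k, QR R k = (2 / R) * (l ^ k + u ^ k) := fun k => rfl
  have hlt : ∀ k : ℕ, k ≠ 0 → u ^ (2 * k) < l ^ (2 * k) := by
    intro k hk
    rw [pow_mul, pow_mul]
    exact pow_lt_pow_left₀ hsq (sq_nonneg u) hk
  have hPne : ∀ k : ℕ, k ≠ 0 → PR R (2 * k) ≠ 0 := by
    intro k hk
    rw [hP]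
    have h2 : 0 < l ^ (2 * k) - u ^ (2 * k) := sub_pos.mpr (hlt k hk)
    exact ne_of_gt (mul_pos hcpos h2)
  -- the key per-term identity
  have key : ∀ k : ℕ, k ≠ 0 →
      2 * (PR R (2 * k * (n + 1)) / PR R (2 * k)) -
        R / 2 * (PR R (2 * k * n) * QR R (2 * k) / PR R (2 * k)) =
      (l ^ (2 * k)) ^ n + (u ^ (2 * k)) ^ n := by
    intro k hk
    have hab : l ^ (2 * k) - u ^ (2 * k) ≠ 0 := ne_of_gt (sub_pos.mpr (hlt k hk))
    rw [hP, hP, hP, hQ, pow_mul l (2 * k), pow_mul u (2 * k),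
      pow_mul l (2 * k) n, pow_mul u (2 * k) n]
    set a := l ^ (2 * k)
    set b := u ^ (2 * k)
    field_simp
    ring
  -- sum splitting
  have split : ∀ f : ℕ → ℝ,
      ∑ j ∈ Finset.range (2 * m + 1), f j =
        (∑ j ∈ Finset.range m, (f j + f (2 * m - j))) + f m := by
    intro f
    have h2m : 2 * m + 1 = (m + 1) + m := by omega
    rw [h2m, Finset.sum_range_add, Finset.sum_range_succ]
    have hrefl : ∑ j ∈ Finset.range m, f (m + 1 + j) =
        ∑ j ∈ Finset.range m, f (2 * m - j) := by
      rw [← Finset.sum_range_reflect (fun j => f (2 * m - j)) m]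
      apply Finset.sum_congr rfl
      intro j hj
      rw [Finset.mem_range] at hj
      congr 1
      omega
    rw [hrefl, Finset.sum_add_distrib]
    ring
  have hC : c ^ (2 * m) = 2 ^ (2 * m) / (R ^ (3 * m) * (R + 2) ^ m) := by
    have hw2m : w ^ (2 * m) = R ^ m * (R + 2) ^ m := by
      rw [pow_mul, hw2]
      rw [show R ^ 2 + 2 * R = R * (R + 2) by ring, mul_pow]
    rw [hc_def, div_pow, mul_pow, hw2m]
    rw [show 3 * m = 2 * m + m by omega, pow_add]
    ring
  -- abbreviation for the common summand
  set g : ℕ → ℝ := fun j => (-1 : ℝ) ^ j * ((2 * m).choose j : ℝ) * (-R / 2) ^ (j * n) *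
      ((l ^ (2 * (m - j))) ^ n + (u ^ (2 * (m - j))) ^ n) with hg_def
  -- constant identities
  have hpow1 : (2 : ℝ) ^ (2 * m + 1) / (R ^ (3 * m) * (R + 2) ^ m) = 2 * c ^ (2 * m) := by
    rw [hC, pow_succ]; ring
  have hpow2 : (2 : ℝ) ^ (2 * m - 1) / (R ^ (3 * m - 1) * (R + 2) ^ m) =
      R / 2 * c ^ (2 * m) := by
    have h1 : (2 : ℝ) ^ (2 * m) = 2 ^ (2 * m - 1) * 2 := by
      rw [← pow_succ]; congr 1; omega
    have h2 : (R : ℝ) ^ (3 * m) = R ^ (3 * m - 1) * R := by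
      rw [← pow_succ]; congr 1; omega
    rw [hC, h1, h2]
    have hRne : R ≠ 0 := ne_of_gt hR
    have hR2 : (R + 2) ^ m ≠ 0 := by positivity
    have hRm : R ^ (3 * m - 1) ≠ 0 := pow_ne_zero _ hRne
    field_simp
  -- transform the RHS
  have hRHS : (2 : ℝ) ^ (2 * m + 1) / (R ^ (3 * m) * (R + 2) ^ m) *
        (∑ j ∈ Finset.range m,
          (-1 : ℝ) ^ j * (Nat.choose (2 * m) j : ℝ) *
            (PR R (2 * (m - j) * (n + 1)) / PR R (2 * (m - j))) * (-R / 2) ^ (j * n)) -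
      2 ^ (2 * m - 1) / (R ^ (3 * m - 1) * (R + 2) ^ m) *
        (∑ j ∈ Finset.range m,
          (-1 : ℝ) ^ j * (Nat.choose (2 * m) j : ℝ) *
            (PR R (2 * (m - j) * n) * QR R (2 * (m - j)) / PR R (2 * (m - j))) *
            (-R / 2) ^ (j * n)) +
      (-1 : ℝ) ^ m * (Nat.choose (2 * m) m : ℝ) * (2 ^ (2 * m) / (R ^ (3 * m) * (R + 2) ^ m)) *
        (-R / 2) ^ (m * n) =
      c ^ (2 * m) * ((∑ j ∈ Finset.range m, g j) +
        (-1 : ℝ) ^ m * ((2 * m).choose m : ℝ) * (-R / 2) ^ (m * n)) := by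
    rw [hpow1, hpow2, ← hC, mul_add]
    rw [Finset.mul_sum, Finset.mul_sum, Finset.mul_sum]
    rw [← Finset.sum_sub_distrib]
    congr 1
    · apply Finset.sum_congr rfl
      intro j hj
      rw [Finset.mem_range] at hj
      have hk : m - j ≠ 0 := by omega
      have hkey := key (m - j) hk
      simp only [hg_def]
      linear_combination (c ^ (2 * m) * ((-1 : ℝ) ^ j * ((2 * m).choose j : ℝ) *
        (-R / 2) ^ (j * n))) * hkey
    · ring
  rw [hRHS]
  -- expand the LHS
  rw [hP n, mul_pow, sub_pow, split]
  congr 1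
  · congr 1
    · apply Finset.sum_congr rfl
      intro j hj
      rw [Finset.mem_range] at hj
      have e1 : ((-1 : ℝ)) ^ (j + 2 * m) = (-1) ^ j := by
        rw [pow_add, pow_mul]; simp
      have e2 : ((-1 : ℝ)) ^ (2 * m - j + 2 * m) = (-1) ^ j := by
        rw [show 2 * m - j + 2 * m = j + 2 * (2 * m - j) by omega, pow_add, pow_mul]
        simp
      have e3 : (((2 * m).choose (2 * m - j) : ℕ) : ℝ) = ((2 * m).choose j : ℝ) := by
        exact_mod_cast Nat.choose_symm (show j ≤ 2 * m by omega)
      have e4 : 2 * m - (2 * m - j) = j := by omega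
      rw [e1, e2, e3, e4]
      have hx : (l ^ n) ^ (2 * m - j) = (l ^ n) ^ j * (l ^ (2 * (m - j))) ^ n := by
        rw [← pow_mul, ← pow_mul, ← pow_mul, ← pow_add]
        congr 1
        have : 2 * m - j = j + 2 * (m - j) := by omega
        rw [this]; ring
      have hy : (u ^ n) ^ (2 * m - j) = (u ^ n) ^ j * (u ^ (2 * (m - j))) ^ n := by
        rw [← pow_mul, ← pow_mul, ← pow_mul, ← pow_add]
        congr 1
        have : 2 * m - j = j + 2 * (m - j) := by omega
        rw [this]; ring
      have hz : (l ^ n) ^ j * (u ^ n) ^ j = (-R / 2) ^ (j * n) := by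
        rw [← mul_pow, ← mul_pow, hlu, ← pow_mul, Nat.mul_comm n j]
      simp only [hg_def]
      rw [hx, hy, ← hz]
      ring
    · have e1 : ((-1 : ℝ)) ^ (m + 2 * m) = (-1) ^ m := by
        rw [pow_add, pow_mul]; simp
      have e4 : 2 * m - m = m := by omega
      rw [e1, e4]
      have hz : (l ^ n) ^ m * (u ^ n) ^ m = (-R / 2) ^ (m * n) := by
        rw [← mul_pow, ← mul_pow, hlu, ← pow_mul, Nat.mul_comm n m]
      rw [← hz]
      ring
end

section
/- Let K be a field (e.g. ℝ), x ∈ K with x ≠ 0, and N ≥ 1 a natural number. Then x^{2N} − x^{−2N} = (x + x⁻¹) · ∑_{l=0}^{N−1} C(N+l, N−l−1) · (x − x⁻¹)^{2l+1}, where C(N+l, N−l−1) denotes the binomial coefficient. -/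
lemma pascal2 (a k : ℕ) :
    Nat.choose (a+2) (k+2) + Nat.choose a k
      = Nat.choose a (k+2) + 2 * Nat.choose (a+1) (k+1) := by
  simp [Nat.choose_succ_succ]
  ring

/-- `x^{2N} − x^{−2N} = (x + x⁻¹) · ∑_{l=0}^{N−1} C(N+l, N−l−1)·(x − x⁻¹)^{2l+1}` in a field. -/
theorem even_power_difference_identity {K : Type*} [Field K] (x : K) (hx : x ≠ 0)
    (N : ℕ) (hN : 1 ≤ N) :
    x ^ (2 * N) - x⁻¹ ^ (2 * N) =
      (x + x⁻¹) *
        ∑ l ∈ Finset.range N, (Nat.choose (N + l) (N - l - 1) : K) * (x - x⁻¹) ^ (2 * l + 1) := by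
  set s : K := x - x⁻¹ with hs
  set S : ℕ → K := fun M => ∑ l ∈ Finset.range M,
      (Nat.choose (M + l) (M - l - 1) : K) * s ^ (2 * l + 1) with hS
  -- recurrence for the sums
  have rec_S : ∀ M : ℕ, S (M + 2) = (s ^ 2 + 2) * S (M + 1) - S M := by
    intro M
    match M with
    | 0 =>
      simp [hS, Finset.sum_range_succ]
      ring
    | (m + 1) =>
      have eqL : S (m + 3) =
          (m + 3 : K) * s
            + (∑ l ∈ Finset.range m,
                (Nat.choose (m + 3 + (l + 1)) (m + 3 - (l + 1) - 1) : K) * s ^ (2 * (l + 1) + 1))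
            + (2 * (m : K) + 4) * s ^ (2 * m + 3) + s ^ (2 * m + 5) := by
        show (∑ l ∈ Finset.range (m + 3),
            (Nat.choose (m + 3 + l) (m + 3 - l - 1) : K) * s ^ (2 * l + 1)) = _
        rw [Finset.sum_range_succ, Finset.sum_range_succ, Finset.sum_range_succ']
        have h1 : m + 3 + (m + 1) = 2 * m + 4 := by ring
        have h2 : m + 3 - (m + 1) - 1 = 1 := by omega
        have h3 : m + 3 + (m + 2) = 2 * m + 5 := by ring
        have h4 : m + 3 - (m + 2) - 1 = 0 := by omega
        have h5 : m + 3 - 0 - 1 = m + 2 := by omega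
        rw [h1, h2, h3, h4, h5, Nat.choose_one_right, Nat.choose_zero_right,
          Nat.choose_succ_self_right]
        push_cast
        ring
      have eqM : S (m + 2) =
          (m + 2 : K) * s
            + (∑ l ∈ Finset.range m,
                (Nat.choose (m + 2 + (l + 1)) (m + 2 - (l + 1) - 1) : K) * s ^ (2 * (l + 1) + 1))
            + s ^ (2 * m + 3) := by
        show (∑ l ∈ Finset.range (m + 2),
            (Nat.choose (m + 2 + l) (m + 2 - l - 1) : K) * s ^ (2 * l + 1)) = _
        rw [Finset.sum_range_succ, Finset.sum_range_succ']
        have h1 : m + 2 + (m + 1) = 2 * m + 3 := by ring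
        have h2 : m + 2 - (m + 1) - 1 = 0 := by omega
        have h5 : m + 2 - 0 - 1 = m + 1 := by omega
        rw [h1, h2, h5, Nat.choose_zero_right, Nat.choose_succ_self_right]
        push_cast
        ring
      -- also need S(m+2) peeled from the top, for the s^2 * S(m+2) part
      have eqM' : S (m + 2) =
          (∑ l ∈ Finset.range m,
              (Nat.choose (m + 2 + l) (m + 2 - l - 1) : K) * s ^ (2 * l + 1))
            + (2 * (m : K) + 2) * s ^ (2 * m + 1) + s ^ (2 * m + 3) := by
        show (∑ l ∈ Finset.range (m + 2),
            (Nat.choose (m + 2 + l) (m + 2 - l - 1) : K) * s ^ (2 * l + 1)) = _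
        rw [Finset.sum_range_succ, Finset.sum_range_succ]
        have h1 : m + 2 + m = 2 * m + 2 := by ring
        have h2 : m + 2 - m - 1 = 1 := by omega
        have h3 : m + 2 + (m + 1) = 2 * m + 3 := by ring
        have h4 : m + 2 - (m + 1) - 1 = 0 := by omega
        rw [h1, h2, h3, h4, Nat.choose_one_right, Nat.choose_zero_right]
        push_cast
        ring
      have eqR : S (m + 1) =
          (m + 1 : K) * s
            + (∑ l ∈ Finset.range m,
                (Nat.choose (m + 1 + (l + 1)) (m + 1 - (l + 1) - 1) : K) * s ^ (2 * (l + 1) + 1)) := by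
        show (∑ l ∈ Finset.range (m + 1),
            (Nat.choose (m + 1 + l) (m + 1 - l - 1) : K) * s ^ (2 * l + 1)) = _
        rw [Finset.sum_range_succ']
        have h5 : m + 1 - 0 - 1 = m := by omega
        rw [h5, Nat.choose_succ_self_right]
        push_cast
        ring
      have key :
          (∑ l ∈ Finset.range m,
              (Nat.choose (m + 3 + (l + 1)) (m + 3 - (l + 1) - 1) : K) * s ^ (2 * (l + 1) + 1))
          + (∑ l ∈ Finset.range m,
              (Nat.choose (m + 1 + (l + 1)) (m + 1 - (l + 1) - 1) : K) * s ^ (2 * (l + 1) + 1))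
          = (∑ l ∈ Finset.range m,
              (Nat.choose (m + 2 + l) (m + 2 - l - 1) : K) * s ^ (2 * l + 1)) * s ^ 2
            + 2 * (∑ l ∈ Finset.range m,
              (Nat.choose (m + 2 + (l + 1)) (m + 2 - (l + 1) - 1) : K) * s ^ (2 * (l + 1) + 1)) := by
        rw [Finset.sum_mul, Finset.mul_sum, ← Finset.sum_add_distrib, ← Finset.sum_add_distrib]
        refine Finset.sum_congr rfl ?_
        intro l hl
        have hlm : l < m := Finset.mem_range.mp hl
        obtain ⟨k, hk⟩ : ∃ k, m = l + k + 1 := ⟨m - l - 1, by omega⟩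
        subst hk
        have e1 : l + k + 1 + 3 + (l + 1) = (2 * l + k + 3) + 2 := by ring
        have e2 : l + k + 1 + 3 - (l + 1) - 1 = k + 2 := by omega
        have e3 : l + k + 1 + 1 + (l + 1) = 2 * l + k + 3 := by ring
        have e4 : l + k + 1 + 1 - (l + 1) - 1 = k := by omega
        have e5 : l + k + 1 + 2 + l = 2 * l + k + 3 := by ring
        have e6 : l + k + 1 + 2 - l - 1 = k + 2 := by omega
        have e7 : l + k + 1 + 2 + (l + 1) = (2 * l + k + 3) + 1 := by ring
        have e8 : l + k + 1 + 2 - (l + 1) - 1 = k + 1 := by omega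
        rw [e1, e2, e3, e4, e5, e6, e7, e8]
        have := pascal2 (2 * l + k + 3) k
        have hcast : ((Nat.choose ((2*l+k+3)+2) (k+2) : ℕ) : K) + (Nat.choose (2*l+k+3) k : ℕ)
            = (Nat.choose (2*l+k+3) (k+2) : ℕ) + 2 * (Nat.choose ((2*l+k+3)+1) (k+1) : ℕ) := by
          exact_mod_cast congrArg (Nat.cast : ℕ → K) this
        ring_nf
        ring_nf at hcast
        linear_combination s ^ (3 + l * 2) * hcast
      rw [eqL, eqR]
      rw [show (s^2+2) * S (m+2) = s^2 * S (m+2) + 2 * S (m+2) by ring]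
      rw [eqM']
      have hAB := eqM'.symm.trans eqM
      linear_combination key - 2 * hAB
  -- recurrence for the powers
  have rec_a : ∀ M : ℕ, x ^ (2*(M+2)) - x⁻¹ ^ (2*(M+2)) =
      (s ^ 2 + 2) * (x ^ (2*(M+1)) - x⁻¹ ^ (2*(M+1))) - (x ^ (2*M) - x⁻¹ ^ (2*M)) := by
    intro M
    have h1 : x ^ (2*M) ≠ 0 := pow_ne_zero _ hx
    rw [show 2*(M+2) = 2*M + 4 by ring, show 2*(M+1) = 2*M + 2 by ring,
      pow_add, pow_add, inv_pow, inv_pow, inv_pow, hs]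
    field_simp
    ring
  have main : ∀ M : ℕ, x ^ (2*M) - x⁻¹ ^ (2*M) = (x + x⁻¹) * S M := by
    intro M
    induction M using Nat.twoStepInduction with
    | zero => simp [hS]
    | one =>
      simp only [hS, Finset.sum_range_one, hs]
      field_simp
      norm_num [Nat.choose]
      field_simp
      ring
    | more n ih1 ih2 =>
      rw [rec_a n, rec_S n, ih1, ih2]
      ring
  exact main N
end

section
/- Let R > 0 be a real number, m ≥ 2 a natural number, σ a real number, and set a = 2^m·P_R(m), b = 2^m, c = −(R(R+1)·2^{m−1}·P_R(m) − R²·2^{m−2}·P_R(m−2)), d = (−1)^m·R^m. If b + cσ + dσ² ≠ 0, then for every natural number n, ∑_{k=0}^{n} P_R(km)·σ^k = (a·σ − σ^{n+1}·(b·P_R(m(n+1)) − d·σ·P_R(mn))) / (b + cσ + dσ²). -/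
lemma PR_rec (R : ℝ) (hR : 0 < R) (p k : ℕ) :
    (2:ℝ)^(p+2) * PR R ((p+2)*(k+2))
      + (-(R * (R + 1) * 2 ^ (p+1) * PR R (p+2) - R ^ 2 * 2 ^ p * PR R p)) * PR R ((p+2)*(k+1))
      + ((-1:ℝ)^(p+2) * R^(p+2)) * PR R ((p+2)*k) = 0 := by
  set W := Real.sqrt (R^2 + 2*R) with hWdef
  have hW2 : W^2 = R^2 + 2*R := Real.sq_sqrt (by nlinarith)
  have hWpos : 0 < W := Real.sqrt_pos.mpr (by nlinarith)
  have hR0 : R ≠ 0 := ne_of_gt hR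
  have hW0 : W ≠ 0 := ne_of_gt hWpos
  set L : ℝ := ((R+W)/2)^(p+2) with hL
  set M : ℝ := ((R-W)/2)^(p+2) with hM
  have hd' : ((-1:ℝ)^(p+2) * R^(p+2)) = 2^(p+2) * (L * M) := by
    have h1 : (R+W)/2 * ((R-W)/2) = -R/2 := by linear_combination (-(1:ℝ)/4) * hW2
    rw [hL, hM, ← mul_pow ((R+W)/2), h1, ← mul_pow, ← mul_pow]
    congr 1
    ring
  have hc' : (-(R * (R + 1) * 2 ^ (p+1) * PR R (p+2) - R ^ 2 * 2 ^ p * PR R p))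
      = -(2:ℝ)^(p+2) * (L + M) := by
    set A : ℝ := ((R+W)/2)^p with hA
    set B : ℝ := ((R-W)/2)^p with hB
    have poly : (R+1)*(A*((R+W)/2)^2 - B*((R-W)/2)^2) - R/2*(A - B)
        = W*(A*((R+W)/2)^2 + B*((R-W)/2)^2) := by
      linear_combination (-(((R-1+W)*A + (W-R+1)*B))/4) * hW2
    have h2 : R*W*PR R (p+2) = 2*(A*((R+W)/2)^2 - B*((R-W)/2)^2) := by
      rw [PR, ← hWdef, pow_add, pow_add, hA, hB]
      field_simp
    have h3 : R*W*PR R p = 2*(A - B) := by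
      rw [PR, ← hWdef, hA, hB]
      field_simp
    have hLM : L + M = A*((R+W)/2)^2 + B*((R-W)/2)^2 := by
      rw [hL, hM, pow_add, pow_add, hA, hB]
    have hRW : (R*W) ≠ 0 := by positivity
    refine mul_left_cancel₀ hRW ?_
    rw [hLM]
    linear_combination (-(R*(R+1)*2^(p+1))) * h2 + R^2*2^p * h3 - 2^(p+2)*R * poly
  rw [hc', hd']
  simp only [PR, pow_mul]
  rw [← hL, ← hM]
  ring

/-- Closed form for the weighted partial sums `∑_{k=0}^{n} P_R(km)·σ^k`. -/
theorem PR_weighted_partial_sum (R : ℝ) (hR : 0 < R) (m : ℕ) (hm : 2 ≤ m) (σ : ℝ)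
    (a b c d : ℝ) (ha : a = 2 ^ m * PR R m) (hb : b = 2 ^ m)
    (hc : c = -(R * (R + 1) * 2 ^ (m - 1) * PR R m - R ^ 2 * 2 ^ (m - 2) * PR R (m - 2)))
    (hd : d = (-1 : ℝ) ^ m * R ^ m) (hden : b + c * σ + d * σ ^ 2 ≠ 0) (n : ℕ) :
    ∑ k ∈ Finset.range (n + 1), PR R (k * m) * σ ^ k =
      (a * σ - σ ^ (n + 1) * (b * PR R (m * (n + 1)) - d * σ * PR R (m * n))) /
        (b + c * σ + d * σ ^ 2) := by
  obtain ⟨p, rfl⟩ : ∃ p, m = p + 2 := ⟨m - 2, by omega⟩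
  have hrec : ∀ k : ℕ, b * PR R ((p+2)*(k+2)) + c * PR R ((p+2)*(k+1)) + d * PR R ((p+2)*k) = 0 := by
    intro k
    rw [hb, hc, hd]
    have := PR_rec R hR p k
    simpa using this
  have h0 : PR R 0 = 0 := by simp [PR]
  induction n with
  | zero =>
    rw [Finset.sum_range_one, eq_div_iff hden]
    simp only [Nat.zero_mul, Nat.mul_zero, zero_add, Nat.mul_one, pow_zero, pow_one, h0,
      zero_mul, mul_zero, sub_zero, mul_one]
    rw [ha, hb]
    ring
  | succ n ih =>
    rw [Finset.sum_range_succ, ih, eq_div_iff hden, add_mul, div_mul_cancel₀ _ hden]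
    have e1 : (n+1)*(p+2) = (p+2)*(n+1) := by ring
    have e2 : (p+2)*(n+1+1) = (p+2)*(n+2) := by ring
    rw [e1, e2]
    linear_combination (σ^(n+2)) * hrec n
end

section
/- Let R > 0 be a real number with 3R − 2 ≠ 0. Then for every natural number n, ∑_{k=0}^{n} P_R(k)² = 16(R−2)/(R²(R+2)²(3R−2)) + (4·P_R(2n+2) + 2R(R−1)·P_R(2n))/((R+2)(3R−2)R²) − (8/(R²(R+2)²))·(−R/2)^n. Equivalently, the generating function ∑_{n≥0} (∑_{k=0}^{n} P_R(k)²)·zⁿ equals 16(R−2)/((1−z)R²(R+2)²(3R−2)) + 16(−zR+zR²+2)/((R+2)(3R−2)R²(z²R²−4zR(R+1)+4)) − 16/((zR+2)R²(R+2)²). -/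
open PowerSeries

private lemma geomPS (a : ℝ) :
    (1 - C (R := ℝ) a * X) * PowerSeries.mk (fun n => a ^ n) = 1 := by
  ext n
  cases n with
  | zero => simp
  | succ n =>
    rw [sub_mul, one_mul, map_sub, mul_assoc, PowerSeries.coeff_C_mul,
      PowerSeries.coeff_succ_X_mul, PowerSeries.coeff_mk, PowerSeries.coeff_mk,
      PowerSeries.coeff_one]
    simp [pow_succ, mul_comm]

private lemma keySum (R s : ℝ) (hR : R ≠ 0) (hR2 : R + 2 ≠ 0) (h32 : 3 * R - 2 ≠ 0)
    (hs0 : s ≠ 0) (hs2 : s ^ 2 = R ^ 2 + 2 * R)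
    (f : ℕ → ℝ) (hf : ∀ n, f n = 2 / (R * s) * (((R + s) / 2) ^ n - ((R - s) / 2) ^ n)) :
    ∀ n, ∑ k ∈ Finset.range (n + 1), f k ^ 2 =
      16 * (R - 2) / (R ^ 2 * (R + 2) ^ 2 * (3 * R - 2)) +
      4 * (R + 2 * s + 2) / (R ^ 2 * (R + 2) ^ 2 * (3 * R - 2)) * (((R + s) / 2) ^ 2) ^ n +
      4 * (R - 2 * s + 2) / (R ^ 2 * (R + 2) ^ 2 * (3 * R - 2)) * (((R - s) / 2) ^ 2) ^ n +
      -8 / (R ^ 2 * (R + 2) ^ 2) * (-R / 2) ^ n := by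
  have hlm : ((R + s) / 2) * ((R - s) / 2) = -R / 2 := by linear_combination (-1/4) * hs2
  have hsq : ∀ n : ℕ, f n ^ 2 =
      4 / (R ^ 2 * s ^ 2) * ((((R + s) / 2) ^ 2) ^ n + (((R - s) / 2) ^ 2) ^ n - 2 * (-R / 2) ^ n) := by
    intro n
    have h1 : (((R + s) / 2) : ℝ) ^ n * ((R - s) / 2) ^ n = (-R / 2) ^ n := by
      rw [← mul_pow, hlm]
    have h2 : ((((R + s) / 2) : ℝ) ^ n) ^ 2 = (((R + s) / 2) ^ 2) ^ n := by
      rw [← pow_mul, ← pow_mul, mul_comm]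
    have h3 : ((((R - s) / 2) : ℝ) ^ n) ^ 2 = (((R - s) / 2) ^ 2) ^ n := by
      rw [← pow_mul, ← pow_mul, mul_comm]
    rw [hf, ← h1, ← h2, ← h3]
    ring
  intro n
  induction n with
  | zero =>
    rw [Finset.sum_range_one, hf 0]
    simp only [pow_zero]
    field_simp [show R * 3 - 2 ≠ 0 by rwa [mul_comm]]
    ring
  | succ n ih =>
    rw [Finset.sum_range_succ, ih, hsq (n + 1),
      show ((((R + s) / 2) ^ 2 : ℝ)) ^ (n + 1) = (((R + s) / 2) ^ 2) ^ n * ((R + s) / 2) ^ 2 from pow_succ _ _,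
      show ((((R - s) / 2) ^ 2 : ℝ)) ^ (n + 1) = (((R - s) / 2) ^ 2) ^ n * ((R - s) / 2) ^ 2 from pow_succ _ _,
      show ((-R / 2 : ℝ)) ^ (n + 1) = (-R / 2) ^ n * (-R / 2) from pow_succ _ _]
    generalize (((R + s) / 2 : ℝ) ^ 2) ^ n = Xv
    generalize (((R - s) / 2 : ℝ) ^ 2) ^ n = Yv
    generalize ((-R / 2 : ℝ)) ^ n = Zv
    field_simp [show R * 3 - 2 ≠ 0 by rwa [mul_comm]]
    have e3 : s ^ 3 = s * (R ^ 2 + 2 * R) := by rw [pow_succ, hs2]; ring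
    have e4 : s ^ 4 = (R ^ 2 + 2 * R) ^ 2 := by rw [show s ^ 4 = (s ^ 2) ^ 2 by ring, hs2]
    have e5 : s ^ 5 = s * (R ^ 2 + 2 * R) ^ 2 := by rw [show s ^ 5 = s * (s ^ 2) ^ 2 by ring, hs2]
    have e6 : s ^ 6 = (R ^ 2 + 2 * R) ^ 3 := by rw [show s ^ 6 = (s ^ 2) ^ 3 by ring, hs2]
    have e7 : s ^ 7 = s * (R ^ 2 + 2 * R) ^ 3 := by rw [show s ^ 7 = s * (s ^ 2) ^ 3 by ring, hs2]
    have e8 : s ^ 8 = (R ^ 2 + 2 * R) ^ 4 := by rw [show s ^ 8 = (s ^ 2) ^ 4 by ring, hs2]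
    ring_nf
    simp only [e8, e7, e6, e5, e4, e3, hs2]
    ring

set_option maxHeartbeats 2000000 in
private lemma coePS_ofNat (n : ℕ) [n.AtLeastTwo] :
    ((no_index (OfNat.ofNat n) : Polynomial ℝ) : PowerSeries ℝ) = OfNat.ofNat n := by
  rw [← Polynomial.coeToPowerSeries.ringHom_apply, map_ofNat]

set_option maxHeartbeats 2000000 in
open PowerSeries in
/-- Closed form for `∑_{k=0}^{n} P_R(k)²` and the corresponding generating function. -/
theorem PR_sum_of_squares (R : ℝ) (hR : 0 < R) (h32 : 3 * R - 2 ≠ 0) :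
    (∀ n : ℕ, ∑ k ∈ Finset.range (n + 1), PR R k ^ 2 =
        16 * (R - 2) / (R ^ 2 * (R + 2) ^ 2 * (3 * R - 2)) +
          (4 * PR R (2 * n + 2) + 2 * R * (R - 1) * PR R (2 * n)) /
            ((R + 2) * (3 * R - 2) * R ^ 2) -
          8 / (R ^ 2 * (R + 2) ^ 2) * (-R / 2) ^ n) ∧
      PowerSeries.mk (fun n => ∑ k ∈ Finset.range (n + 1), PR R k ^ 2) =
        C (R := ℝ) (16 * (R - 2)) * ((1 - X) * C (R := ℝ) (R ^ 2 * (R + 2) ^ 2 * (3 * R - 2)))⁻¹ +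
          C (R := ℝ) 16 * (-(X * C (R := ℝ) R) + X * C (R := ℝ) (R ^ 2) + 2) *
            (C (R := ℝ) ((R + 2) * (3 * R - 2) * R ^ 2) *
              (X ^ 2 * C (R := ℝ) (R ^ 2) - 4 * X * C (R := ℝ) (R * (R + 1)) + 4))⁻¹ -
          C (R := ℝ) 16 * ((X * C (R := ℝ) R + 2) * C (R := ℝ) (R ^ 2 * (R + 2) ^ 2))⁻¹ := by
  have hR0 : R ≠ 0 := ne_of_gt hR
  have hR2 : R + 2 ≠ 0 := by positivity
  set s : ℝ := Real.sqrt (R ^ 2 + 2 * R) with hsdef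
  have hs2 : s ^ 2 = R ^ 2 + 2 * R := Real.sq_sqrt (by nlinarith)
  have hs0 : s ≠ 0 := by
    have h : (0:ℝ) < R ^ 2 + 2 * R := by nlinarith
    rw [hsdef]; exact ne_of_gt (Real.sqrt_pos.mpr h)
  have hf : ∀ n : ℕ, PR R n = 2 / (R * s) * (((R + s) / 2) ^ n - ((R - s) / 2) ^ n) :=
    fun n => rfl
  have key := keySum R s hR0 hR2 h32 hs0 hs2 (PR R) hf
  constructor
  · intro n
    rw [key n, hf (2 * n + 2), hf (2 * n),
      show ((R + s) / 2 : ℝ) ^ (2 * n + 2) = (((R + s) / 2) ^ 2) ^ n * ((R + s) / 2) ^ 2 from by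
        rw [pow_add, pow_mul],
      show ((R - s) / 2 : ℝ) ^ (2 * n + 2) = (((R - s) / 2) ^ 2) ^ n * ((R - s) / 2) ^ 2 from by
        rw [pow_add, pow_mul],
      show ((R + s) / 2 : ℝ) ^ (2 * n) = (((R + s) / 2) ^ 2) ^ n from by rw [pow_mul],
      show ((R - s) / 2 : ℝ) ^ (2 * n) = (((R - s) / 2) ^ 2) ^ n from by rw [pow_mul]]
    generalize (((R + s) / 2 : ℝ) ^ 2) ^ n = Xv
    generalize (((R - s) / 2 : ℝ) ^ 2) ^ n = Yv
    generalize ((-R / 2 : ℝ)) ^ n = Zv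
    field_simp [show R * 3 - 2 ≠ 0 by rwa [mul_comm]]
    have e3 : s ^ 3 = s * (R ^ 2 + 2 * R) := by rw [pow_succ, hs2]; ring
    have e4 : s ^ 4 = (R ^ 2 + 2 * R) ^ 2 := by rw [show s ^ 4 = (s ^ 2) ^ 2 by ring, hs2]
    have e5 : s ^ 5 = s * (R ^ 2 + 2 * R) ^ 2 := by rw [show s ^ 5 = s * (s ^ 2) ^ 2 by ring, hs2]
    have e6 : s ^ 6 = (R ^ 2 + 2 * R) ^ 3 := by rw [show s ^ 6 = (s ^ 2) ^ 3 by ring, hs2]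
    have e7 : s ^ 7 = s * (R ^ 2 + 2 * R) ^ 3 := by rw [show s ^ 7 = s * (s ^ 2) ^ 3 by ring, hs2]
    have e8 : s ^ 8 = (R ^ 2 + 2 * R) ^ 4 := by rw [show s ^ 8 = (s ^ 2) ^ 4 by ring, hs2]
    ring_nf
    simp only [e8, e7, e6, e5, e4, e3, hs2]
    ring
  · set D1 := (1 - X) * C (R := ℝ) (R ^ 2 * (R + 2) ^ 2 * (3 * R - 2)) with hD1
    set D2 := C (R := ℝ) ((R + 2) * (3 * R - 2) * R ^ 2) *
      (X ^ 2 * C (R := ℝ) (R ^ 2) - 4 * X * C (R := ℝ) (R * (R + 1)) + 4) with hD2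
    set D3 := (X * C (R := ℝ) R + 2) * C (R := ℝ) (R ^ 2 * (R + 2) ^ 2) with hD3
    have hk1 : R ^ 2 * (R + 2) ^ 2 * (3 * R - 2) ≠ 0 :=
      mul_ne_zero (mul_ne_zero (pow_ne_zero _ hR0) (pow_ne_zero _ hR2)) h32
    have hk2 : (R + 2) * (3 * R - 2) * R ^ 2 ≠ 0 :=
      mul_ne_zero (mul_ne_zero hR2 h32) (pow_ne_zero _ hR0)
    have hk3 : R ^ 2 * (R + 2) ^ 2 ≠ 0 :=
      mul_ne_zero (pow_ne_zero _ hR0) (pow_ne_zero _ hR2)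
    have hcc1 : constantCoeff (R := ℝ) D1 = R ^ 2 * (R + 2) ^ 2 * (3 * R - 2) := by
      rw [hD1]; simp only [map_mul, map_sub, map_add, map_pow, map_one, map_ofNat,
        PowerSeries.constantCoeff_C, PowerSeries.constantCoeff_X]; ring
    have hcc2 : constantCoeff (R := ℝ) D2 = ((R + 2) * (3 * R - 2) * R ^ 2) * 4 := by
      rw [hD2]; simp only [map_mul, map_sub, map_add, map_pow, map_one, map_ofNat,
        PowerSeries.constantCoeff_C, PowerSeries.constantCoeff_X]; ring
    have hcc3 : constantCoeff (R := ℝ) D3 = 2 * (R ^ 2 * (R + 2) ^ 2) := by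
      rw [hD3]; simp only [map_mul, map_sub, map_add, map_pow, map_one, map_ofNat,
        PowerSeries.constantCoeff_C, PowerSeries.constantCoeff_X]; ring
    have hinv1 : D1 * D1⁻¹ = 1 :=
      PowerSeries.mul_inv_cancel _ (by rw [hcc1]; exact hk1)
    have hinv2 : D2 * D2⁻¹ = 1 :=
      PowerSeries.mul_inv_cancel _ (by rw [hcc2]; exact mul_ne_zero hk2 (by norm_num))
    have hinv3 : D3 * D3⁻¹ = 1 :=
      PowerSeries.mul_inv_cancel _ (by rw [hcc3]; exact mul_ne_zero (by norm_num) hk3)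
    have hQc : constantCoeff (R := ℝ) (D1 * D2 * D3) ≠ 0 := by
      rw [map_mul, map_mul, hcc1, hcc2, hcc3]
      exact mul_ne_zero (mul_ne_zero hk1 (mul_ne_zero hk2 (by norm_num)))
        (mul_ne_zero (by norm_num) hk3)
    have hQne : D1 * D2 * D3 ≠ 0 := fun h => hQc (by rw [h, map_zero])
    have hmk : PowerSeries.mk (fun n => ∑ k ∈ Finset.range (n + 1), PR R k ^ 2) =
        C (R := ℝ) (16 * (R - 2) / (R ^ 2 * (R + 2) ^ 2 * (3 * R - 2))) * PowerSeries.mk (fun j => (1 : ℝ) ^ j) +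
        C (R := ℝ) (4 * (R + 2 * s + 2) / (R ^ 2 * (R + 2) ^ 2 * (3 * R - 2))) * PowerSeries.mk (fun j => (((R + s) / 2) ^ 2 : ℝ) ^ j) +
        C (R := ℝ) (4 * (R - 2 * s + 2) / (R ^ 2 * (R + 2) ^ 2 * (3 * R - 2))) * PowerSeries.mk (fun j => (((R - s) / 2) ^ 2 : ℝ) ^ j) +
        C (R := ℝ) (-8 / (R ^ 2 * (R + 2) ^ 2)) * PowerSeries.mk (fun j => (-R / 2 : ℝ) ^ j) := by
      ext n
      simp only [PowerSeries.coeff_mk, map_add, PowerSeries.coeff_C_mul]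
      rw [key n]; ring
    have hQfac : D1 * D2 * D3 =
        C (R := ℝ) (8 * (R ^ 2 * (R + 2) ^ 2 * (3 * R - 2)) * ((R + 2) * (3 * R - 2) * R ^ 2) * (R ^ 2 * (R + 2) ^ 2)) *
          ((1 - C (R := ℝ) ((1 : ℝ)) * X) * (1 - C (R := ℝ) (((R + s) / 2) ^ 2) * X) * (1 - C (R := ℝ) (((R - s) / 2) ^ 2) * X) * (1 - C (R := ℝ) (-R / 2) * X)) := by
      rw [hD1, hD2, hD3]
      have hp : ((1 - Polynomial.X) * Polynomial.C (R ^ 2 * (R + 2) ^ 2 * (3 * R - 2))) * (Polynomial.C ((R + 2) * (3 * R - 2) * R ^ 2) * (Polynomial.X ^ 2 * Polynomial.C (R ^ 2) - 4 * Polynomial.X * Polynomial.C (R * (R + 1)) + 4)) * ((Polynomial.X * Polynomial.C R + 2) * Polynomial.C (R ^ 2 * (R + 2) ^ 2)) =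
          Polynomial.C (8 * (R ^ 2 * (R + 2) ^ 2 * (3 * R - 2)) * ((R + 2) * (3 * R - 2) * R ^ 2) * (R ^ 2 * (R + 2) ^ 2)) *
            ((1 - Polynomial.C ((1 : ℝ)) * Polynomial.X) * (1 - Polynomial.C (((R + s) / 2) ^ 2) * Polynomial.X) * (1 - Polynomial.C (((R - s) / 2) ^ 2) * Polynomial.X) * (1 - Polynomial.C (-R / 2) * Polynomial.X)) := by
        apply Polynomial.funext
        intro u
        simp only [Polynomial.eval_mul, Polynomial.eval_add, Polynomial.eval_sub,
          Polynomial.eval_neg, Polynomial.eval_pow, Polynomial.eval_one, Polynomial.eval_C,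
          Polynomial.eval_X, Polynomial.eval_ofNat]
        linear_combination ((-9/4)*R^16*u^4 + (9/4)*R^16*u^3 - 15*R^15*u^4 + (21/2)*R^15*u^3 + (9/2)*R^15*u^2 + (9/4)*R^14*s^2*u^4 + (-9/4)*R^14*s^2*u^3 - 22*R^14*u^4 - 26*R^14*u^3 + 48*R^14*u^2 + (39/2)*R^13*s^2*u^4 - 15*R^13*s^2*u^3 + (-9/2)*R^13*s^2*u^2 + 52*R^13*u^4 - 252*R^13*u^3 + 164*R^13*u^2 + 36*R^13*u + 61*R^12*s^2*u^4 - 22*R^12*s^2*u^3 - 39*R^12*s^2*u^2 + 160*R^12*u^4 - 544*R^12*u^3 + 72*R^12*u^2 + 312*R^12*u + 70*R^11*s^2*u^4 + 52*R^11*s^2*u^3 - 122*R^11*s^2*u^2 + 48*R^11*u^4 - 288*R^11*u^3 - 736*R^11*u^2 + 976*R^11*u - 20*R^10*s^2*u^4 + 160*R^10*s^2*u^3 - 140*R^10*s^2*u^2 - 160*R^10*u^4 + 416*R^10*u^3 - 1376*R^10*u^2 + 1120*R^10*u - 88*R^9*s^2*u^4 + 48*R^9*s^2*u^3 + 40*R^9*s^2*u^2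 - 64*R^9*u^4 + 448*R^9*u^3 - 64*R^9*u^2 - 320*R^9*u - 16*R^8*s^2*u^4 - 160*R^8*s^2*u^3 + 176*R^8*s^2*u^2 + 64*R^8*u^4 - 64*R^8*u^3 + 1408*R^8*u^2 - 1408*R^8*u + 32*R^7*s^2*u^4 - 64*R^7*s^2*u^3 + 32*R^7*s^2*u^2 - 128*R^7*u^3 + 384*R^7*u^2 - 256*R^7*u + 64*R^6*s^2*u^3 - 64*R^6*s^2*u^2 - 512*R^6*u^2 + 512*R^6*u) * hs2
      have hq := congrArg (fun p : Polynomial ℝ => (p : PowerSeries ℝ)) hp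
      simp only [Polynomial.coe_mul, Polynomial.coe_add, Polynomial.coe_sub, Polynomial.coe_neg,
        Polynomial.coe_one, Polynomial.coe_pow, Polynomial.coe_C, Polynomial.coe_X,
        coePS_ofNat] at hq
      linear_combination hq
    have hN : C (R := ℝ) (8 * (R ^ 2 * (R + 2) ^ 2 * (3 * R - 2)) * ((R + 2) * (3 * R - 2) * R ^ 2) * (R ^ 2 * (R + 2) ^ 2)) *
        (C (R := ℝ) (16 * (R - 2) / (R ^ 2 * (R + 2) ^ 2 * (3 * R - 2))) *
            ((1 - C (R := ℝ) (((R + s) / 2) ^ 2) * X) * (1 - C (R := ℝ) (((R - s) / 2) ^ 2) * X) * (1 - C (R := ℝ) (-R / 2) * X)) +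
          C (R := ℝ) (4 * (R + 2 * s + 2) / (R ^ 2 * (R + 2) ^ 2 * (3 * R - 2))) *
            ((1 - C (R := ℝ) ((1 : ℝ)) * X) * (1 - C (R := ℝ) (((R - s) / 2) ^ 2) * X) * (1 - C (R := ℝ) (-R / 2) * X)) +
          C (R := ℝ) (4 * (R - 2 * s + 2) / (R ^ 2 * (R + 2) ^ 2 * (3 * R - 2))) *
            ((1 - C (R := ℝ) ((1 : ℝ)) * X) * (1 - C (R := ℝ) (((R + s) / 2) ^ 2) * X) * (1 - C (R := ℝ) (-R / 2) * X)) +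
          C (R := ℝ) (-8 / (R ^ 2 * (R + 2) ^ 2)) *
            ((1 - C (R := ℝ) ((1 : ℝ)) * X) * (1 - C (R := ℝ) (((R + s) / 2) ^ 2) * X) * (1 - C (R := ℝ) (((R - s) / 2) ^ 2) * X))) =
        C (R := ℝ) (16 * (R - 2)) * (D2 * D3) +
          C (R := ℝ) 16 * (-(X * C (R := ℝ) R) + X * C (R := ℝ) (R ^ 2) + 2) * (D1 * D3) -
          C (R := ℝ) 16 * (D1 * D2) := by
      rw [hD1, hD2, hD3]
      have hp : Polynomial.C (8 * (R ^ 2 * (R + 2) ^ 2 * (3 * R - 2)) * ((R + 2) * (3 * R - 2) * R ^ 2) * (R ^ 2 * (R + 2) ^ 2)) *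
          (Polynomial.C (16 * (R - 2) / (R ^ 2 * (R + 2) ^ 2 * (3 * R - 2))) *
            ((1 - Polynomial.C (((R + s) / 2) ^ 2) * Polynomial.X) * (1 - Polynomial.C (((R - s) / 2) ^ 2) * Polynomial.X) * (1 - Polynomial.C (-R / 2) * Polynomial.X)) +
          Polynomial.C (4 * (R + 2 * s + 2) / (R ^ 2 * (R + 2) ^ 2 * (3 * R - 2))) *
            ((1 - Polynomial.C ((1 : ℝ)) * Polynomial.X) * (1 - Polynomial.C (((R - s) / 2) ^ 2) * Polynomial.X) * (1 - Polynomial.C (-R / 2) * Polynomial.X)) +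
          Polynomial.C (4 * (R - 2 * s + 2) / (R ^ 2 * (R + 2) ^ 2 * (3 * R - 2))) *
            ((1 - Polynomial.C ((1 : ℝ)) * Polynomial.X) * (1 - Polynomial.C (((R + s) / 2) ^ 2) * Polynomial.X) * (1 - Polynomial.C (-R / 2) * Polynomial.X)) +
          Polynomial.C (-8 / (R ^ 2 * (R + 2) ^ 2)) *
            ((1 - Polynomial.C ((1 : ℝ)) * Polynomial.X) * (1 - Polynomial.C (((R + s) / 2) ^ 2) * Polynomial.X) * (1 - Polynomial.C (((R - s) / 2) ^ 2) * Polynomial.X))) =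
          Polynomial.C (16 * (R - 2)) * ((Polynomial.C ((R + 2) * (3 * R - 2) * R ^ 2) * (Polynomial.X ^ 2 * Polynomial.C (R ^ 2) - 4 * Polynomial.X * Polynomial.C (R * (R + 1)) + 4)) * ((Polynomial.X * Polynomial.C R + 2) * Polynomial.C (R ^ 2 * (R + 2) ^ 2))) +
          Polynomial.C 16 * (-(Polynomial.X * Polynomial.C R) + Polynomial.X * Polynomial.C (R ^ 2) + 2) * (((1 - Polynomial.X) * Polynomial.C (R ^ 2 * (R + 2) ^ 2 * (3 * R - 2))) * ((Polynomial.X * Polynomial.C R + 2) * Polynomial.C (R ^ 2 * (R + 2) ^ 2))) -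
          Polynomial.C 16 * (((1 - Polynomial.X) * Polynomial.C (R ^ 2 * (R + 2) ^ 2 * (3 * R - 2))) * (Polynomial.C ((R + 2) * (3 * R - 2) * R ^ 2) * (Polynomial.X ^ 2 * Polynomial.C (R ^ 2) - 4 * Polynomial.X * Polynomial.C (R * (R + 1)) + 4))) := by
        apply Polynomial.funext
        intro u
        simp only [Polynomial.eval_mul, Polynomial.eval_add, Polynomial.eval_sub,
          Polynomial.eval_neg, Polynomial.eval_pow, Polynomial.eval_one, Polynomial.eval_C,
          Polynomial.eval_X, Polynomial.eval_ofNat]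
        field_simp [show R * 3 - 2 ≠ 0 by rwa [mul_comm]]
        have e3 : s ^ 3 = s * (R ^ 2 + 2 * R) := by rw [pow_succ, hs2]; ring
        have e4 : s ^ 4 = (R ^ 2 + 2 * R) ^ 2 := by rw [show s ^ 4 = (s ^ 2) ^ 2 by ring, hs2]
        have e5 : s ^ 5 = s * (R ^ 2 + 2 * R) ^ 2 := by rw [show s ^ 5 = s * (s ^ 2) ^ 2 by ring, hs2]
        have e6 : s ^ 6 = (R ^ 2 + 2 * R) ^ 3 := by rw [show s ^ 6 = (s ^ 2) ^ 3 by ring, hs2]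
        have e7 : s ^ 7 = s * (R ^ 2 + 2 * R) ^ 3 := by rw [show s ^ 7 = s * (s ^ 2) ^ 3 by ring, hs2]
        have e8 : s ^ 8 = (R ^ 2 + 2 * R) ^ 4 := by rw [show s ^ 8 = (s ^ 2) ^ 4 by ring, hs2]
        ring_nf
        simp only [e8, e7, e6, e5, e4, e3, hs2]
        ring
      have hq := congrArg (fun p : Polynomial ℝ => (p : PowerSeries ℝ)) hp
      simp only [Polynomial.coe_mul, Polynomial.coe_add, Polynomial.coe_sub, Polynomial.coe_neg,
        Polynomial.coe_one, Polynomial.coe_pow, Polynomial.coe_C, Polynomial.coe_X,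
        coePS_ofNat] at hq
      linear_combination hq
    have hL : PowerSeries.mk (fun n => ∑ k ∈ Finset.range (n + 1), PR R k ^ 2) *
        (D1 * D2 * D3) =
        C (R := ℝ) (16 * (R - 2)) * (D2 * D3) +
          C (R := ℝ) 16 * (-(X * C (R := ℝ) R) + X * C (R := ℝ) (R ^ 2) + 2) * (D1 * D3) -
          C (R := ℝ) 16 * (D1 * D2) := by
      rw [hmk, hQfac, ← hN]
      linear_combination
        (C (R := ℝ) (16 * (R - 2) / (R ^ 2 * (R + 2) ^ 2 * (3 * R - 2))) * C (R := ℝ) (8 * (R ^ 2 * (R + 2) ^ 2 * (3 * R - 2)) * ((R + 2) * (3 * R - 2) * R ^ 2) * (R ^ 2 * (R + 2) ^ 2)) *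
          ((1 - C (R := ℝ) (((R + s) / 2) ^ 2) * X) * (1 - C (R := ℝ) (((R - s) / 2) ^ 2) * X) * (1 - C (R := ℝ) (-R / 2) * X))) * geomPS ((1 : ℝ)) +
        (C (R := ℝ) (4 * (R + 2 * s + 2) / (R ^ 2 * (R + 2) ^ 2 * (3 * R - 2))) * C (R := ℝ) (8 * (R ^ 2 * (R + 2) ^ 2 * (3 * R - 2)) * ((R + 2) * (3 * R - 2) * R ^ 2) * (R ^ 2 * (R + 2) ^ 2)) *
          ((1 - C (R := ℝ) ((1 : ℝ)) * X) * (1 - C (R := ℝ) (((R - s) / 2) ^ 2) * X) * (1 - C (R := ℝ) (-R / 2) * X))) * geomPS (((R + s) / 2) ^ 2) +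
        (C (R := ℝ) (4 * (R - 2 * s + 2) / (R ^ 2 * (R + 2) ^ 2 * (3 * R - 2))) * C (R := ℝ) (8 * (R ^ 2 * (R + 2) ^ 2 * (3 * R - 2)) * ((R + 2) * (3 * R - 2) * R ^ 2) * (R ^ 2 * (R + 2) ^ 2)) *
          ((1 - C (R := ℝ) ((1 : ℝ)) * X) * (1 - C (R := ℝ) (((R + s) / 2) ^ 2) * X) * (1 - C (R := ℝ) (-R / 2) * X))) * geomPS (((R - s) / 2) ^ 2) +
        (C (R := ℝ) (-8 / (R ^ 2 * (R + 2) ^ 2)) * C (R := ℝ) (8 * (R ^ 2 * (R + 2) ^ 2 * (3 * R - 2)) * ((R + 2) * (3 * R - 2) * R ^ 2) * (R ^ 2 * (R + 2) ^ 2)) *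
          ((1 - C (R := ℝ) ((1 : ℝ)) * X) * (1 - C (R := ℝ) (((R + s) / 2) ^ 2) * X) * (1 - C (R := ℝ) (((R - s) / 2) ^ 2) * X))) * geomPS (-R / 2)
    have hRQ : (C (R := ℝ) (16 * (R - 2)) * D1⁻¹ +
          C (R := ℝ) 16 * (-(X * C (R := ℝ) R) + X * C (R := ℝ) (R ^ 2) + 2) * D2⁻¹ -
          C (R := ℝ) 16 * D3⁻¹) * (D1 * D2 * D3) =
        C (R := ℝ) (16 * (R - 2)) * (D2 * D3) +
          C (R := ℝ) 16 * (-(X * C (R := ℝ) R) + X * C (R := ℝ) (R ^ 2) + 2) * (D1 * D3) -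
          C (R := ℝ) 16 * (D1 * D2) := by
      linear_combination (C (R := ℝ) (16 * (R - 2)) * (D2 * D3)) * hinv1 +
        (C (R := ℝ) 16 * (-(X * C (R := ℝ) R) + X * C (R := ℝ) (R ^ 2) + 2) * (D1 * D3)) * hinv2 -
        (C (R := ℝ) 16 * (D1 * D2)) * hinv3
    exact mul_right_cancel₀ hQne (hL.trans hRQ.symm)
end
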